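/- Let p be a prime, n a positive integer coprime to p, and c an indeterminate. Write x^n - 1 = r_{p-1}(c) x^{p-1} + … + r_1(c) x + r_0(c) + Q(x,c)(x^p - x - c) in 𝔽_p[x,c]. Then the greatest common divisor g(c) of r_0(c), …, r_{p-1}(c) in 𝔽_p[c] has no multiple roots (i.e., g is squarefree). -/

import Mathlib

open Polynomial

set_option maxHeartbeats 1000000

theorem stmt_15 (p : ℕ) [Fact p.Prime] (n : ℕ) (hn : 0 < n) (hcop : Nat.Coprime n p)
    (r : Fin p → Polynomial (ZMod p))
    (hr : ∀ i : Fin p, r i =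
      ((X ^ n - 1 : Polynomial (Polynomial (ZMod p))) %ₘ
        (X ^ p - X - C Polynomial.X)).coeff i)
    (g : Polynomial (ZMod p))
    (hg : g = Finset.univ.gcd r) :
    Squarefree (g.map (algebraMap (ZMod p) (AlgebraicClosure (ZMod p)))) := by
  classical
  set K := AlgebraicClosure (ZMod p) with hK
  have hp := (Fact.out : p.Prime)
  have hp2 : 2 ≤ p := hp.two_le
  set φ : ZMod p →+* K := algebraMap (ZMod p) K with hφ
  -- monicity of the divisor
  have hdlt : (X + C Polynomial.X : Polynomial (Polynomial (ZMod p))).degree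
      < (X ^ p : Polynomial (Polynomial (ZMod p))).degree := by
    rw [degree_X_pow, degree_X_add_C]
    exact_mod_cast lt_of_lt_of_le one_lt_two hp2
  have hfe : (X ^ p - X - C Polynomial.X : Polynomial (Polynomial (ZMod p)))
      = X ^ p - (X + C Polynomial.X) := by ring
  have hfm : (X ^ p - X - C Polynomial.X :
      Polynomial (Polynomial (ZMod p))).Monic := by
    rw [hfe]
    exact (monic_X_pow p).sub_of_left hdlt
  have hfdeg : (X ^ p - X - C Polynomial.X :
      Polynomial (Polynomial (ZMod p))).degree = p := by
    rw [hfe, degree_sub_eq_left_of_degree_lt hdlt, degree_X_pow]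
  set F : Polynomial (Polynomial (ZMod p)) := X ^ n - 1 with hF
  set f : Polynomial (Polynomial (ZMod p)) := X ^ p - X - C Polynomial.X with hf
  set R := F %ₘ f with hRdef
  set Q := F /ₘ f with hQdef
  have hdiv : R + f * Q = F := modByMonic_add_div F f
  have hdegR : R.degree < p := by
    have := degree_modByMonic_lt F hfm
    rw [← hRdef] at this
    calc R.degree < f.degree := this
      _ = p := hfdeg
  -- nonzeroness of g
  have hφinj : Function.Injective φ := φ.injective
  have hg0 : g ≠ 0 := by
    intro h0
    have hall : ∀ i : Fin p, r i = 0 := by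
      rw [hg] at h0
      intro i
      exact Finset.gcd_eq_zero_iff.mp h0 i (Finset.mem_univ i)
    have hR0 : R = 0 := by
      refine Polynomial.ext fun j => ?_
      rcases lt_or_ge j p with hj | hj
      · simpa using (hr ⟨j, hj⟩).symm.trans (hall _)
      · simp only [coeff_zero]
        exact coeff_eq_zero_of_degree_lt (lt_of_lt_of_le hdegR (by exact_mod_cast hj))
    have hFfQ : F = f * Q := by rw [← hdiv, hR0, zero_add]
    have : f.eval 0 ∣ F.eval 0 := by
      rw [hFfQ, eval_mul]; exact Dvd.intro _ rfl
    rw [hf, hF] at this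
    simp only [eval_sub, eval_pow, eval_X, eval_one, eval_C] at this
    rw [zero_pow hp.pos.ne', zero_pow hn.ne', sub_zero, zero_sub, zero_sub] at this
    have hXdvd : (Polynomial.X : Polynomial (ZMod p)) ∣ 1 :=
      dvd_neg.mp (neg_dvd.mp this)
    exact Polynomial.not_isUnit_X (isUnit_of_dvd_one hXdvd)
  have hgK0 : g.map φ ≠ 0 := (Polynomial.map_ne_zero hg0)
  -- (n : K) ≠ 0
  have hnK : (n : K) ≠ 0 := by
    have hpn : ¬ (p ∣ n) := (Nat.Prime.coprime_iff_not_dvd hp).mp hcop.symm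
    have h1 : (n : ZMod p) ≠ 0 := by
      rwa [Ne, ZMod.natCast_eq_zero_iff]
    have : (n : K) = φ (n : ZMod p) := by simp [map_natCast]
    rw [this]
    exact fun h => h1 (hφinj (by simpa using h))
  -- the key claim: no square factor
  have key : ∀ α : K, ¬ ((X - C α) ^ 2 ∣ g.map φ) := by
    intro α h2
    -- the dual-number evaluation
    set d0 : DualNumber K := TrivSqZeroExt.inl α + DualNumber.eps with hd0
    set χ : Polynomial (ZMod p) →+* DualNumber K :=
      (Polynomial.aeval d0).toRingHom.comp (mapRingHom φ) with hχ
    set χ0 : Polynomial (ZMod p) →+* K := (evalRingHom α).comp (mapRingHom φ) with hχ0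
    have hχr : ∀ i : Fin p, χ (r i) = 0 := by
      intro i
      have hdvd : (X - C α) ^ 2 ∣ (r i).map φ := by
        refine h2.trans (Polynomial.map_dvd φ ?_)
        rw [hg]; exact Finset.gcd_dvd (Finset.mem_univ i)
      obtain ⟨t, ht⟩ := hdvd
      have : χ (r i) = Polynomial.aeval d0 ((r i).map φ) := rfl
      rw [this, ht, map_mul]
      have : (Polynomial.aeval d0) ((X - C α) ^ 2 : Polynomial K) = 0 := by
        rw [map_pow, map_sub, aeval_X, aeval_C]
        have : d0 - algebraMap K (DualNumber K) α = DualNumber.eps := by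
          rw [hd0]; simp [TrivSqZeroExt.algebraMap_eq_inl']
        rw [this, sq, DualNumber.eps_mul_eps]
      rw [this, zero_mul]
    have hχ0r : ∀ i : Fin p, χ0 (r i) = 0 := by
      intro i
      have hdvd : (X - C α) ∣ (r i).map φ :=
        (dvd_pow_self _ two_ne_zero).trans
          (h2.trans (Polynomial.map_dvd φ
            (by rw [hg]; exact Finset.gcd_dvd (Finset.mem_univ i))))
      have : χ0 (r i) = ((r i).map φ).eval α := rfl
      rw [this]
      exact (dvd_iff_isRoot.mp hdvd)
    -- mapped remainders vanish
    have hRχ : R.map χ = 0 := by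
      refine Polynomial.ext fun j => ?_
      rcases lt_or_ge j p with hj | hj
      · simp only [coeff_map, coeff_zero]
        rw [← (hr ⟨j, hj⟩ : r ⟨j, hj⟩ = R.coeff j)]
        exact hχr _
      · simp only [coeff_map, coeff_zero]
        rw [coeff_eq_zero_of_degree_lt (lt_of_lt_of_le hdegR (by exact_mod_cast hj)), map_zero]
    have hRχ0 : R.map χ0 = 0 := by
      refine Polynomial.ext fun j => ?_
      rcases lt_or_ge j p with hj | hj
      · simp only [coeff_map, coeff_zero]
        rw [← (hr ⟨j, hj⟩ : r ⟨j, hj⟩ = R.coeff j)]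
        exact hχ0r _
      · simp only [coeff_map, coeff_zero]
        rw [coeff_eq_zero_of_degree_lt (lt_of_lt_of_le hdegR (by exact_mod_cast hj)), map_zero]
    -- mapped division identities
    have hχX : χ Polynomial.X = d0 := by
      rw [hχ]; simp
    have hχ0X : χ0 Polynomial.X = α := by
      rw [hχ0]; simp
    set Qd := Q.map χ with hQd
    set Q0 := Q.map χ0 with hQ0
    have hDeq : (X ^ p - X - C d0) * Qd = (X ^ n - 1 : Polynomial (DualNumber K)) := by
      have := congrArg (Polynomial.map χ) hdiv
      rw [Polynomial.map_add, Polynomial.map_mul, hRχ, zero_add, hF, hf] at this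
      simpa [Polynomial.map_sub, Polynomial.map_pow, Polynomial.map_one, hχX] using this
    have hKeq : (X ^ p - X - C α) * Q0 = (X ^ n - 1 : Polynomial K) := by
      have := congrArg (Polynomial.map χ0) hdiv
      rw [Polynomial.map_add, Polynomial.map_mul, hRχ0, zero_add, hF, hf] at this
      simpa [Polynomial.map_sub, Polynomial.map_pow, Polynomial.map_one, hχ0X] using this
    -- get a root of the Artin-Schreier polynomial
    have hdltK : (X + C α : Polynomial K).degree < (X ^ p : Polynomial K).degree := by
      rw [degree_X_pow, degree_X_add_C]
      exact_mod_cast lt_of_lt_of_le one_lt_two hp2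
    have hhdeg : (X ^ p - X - C α : Polynomial K).degree = p := by
      have : (X ^ p - X - C α : Polynomial K) = X ^ p - (X + C α) := by ring
      rw [this, degree_sub_eq_left_of_degree_lt hdltK, degree_X_pow]
    obtain ⟨ζ, hζ⟩ := IsAlgClosed.exists_root (X ^ p - X - C α : Polynomial K)
      (by rw [hhdeg]; exact_mod_cast hp.pos.ne')
    have hζ' : ζ ^ p - ζ - α = 0 := by simpa using hζ
    -- ζ^n = 1
    have hζn : ζ ^ n = 1 := by
      have := congrArg (Polynomial.eval ζ) hKeq
      simp only [eval_mul, eval_sub, eval_pow, eval_X, eval_C, eval_one] at this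
      rw [hζ', zero_mul] at this
      exact sub_eq_zero.mp this.symm
    -- dual number evaluation: Q0.eval ζ = 0
    set w : DualNumber K := Qd.eval (TrivSqZeroExt.inl ζ) with hw
    have hεw : DualNumber.eps * w = 0 := by
      have heq := congrArg (Polynomial.eval (TrivSqZeroExt.inl ζ : DualNumber K)) hDeq
      simp only [eval_mul, eval_sub, eval_pow, eval_X, eval_C, eval_one] at heq
      have hinl : ∀ a : K, (TrivSqZeroExt.inl a : DualNumber K) = algebraMap K (DualNumber K) a :=
        fun a => rfl
      have h1 : ((TrivSqZeroExt.inl ζ : DualNumber K) ^ p - TrivSqZeroExt.inl ζ - d0)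
          = - DualNumber.eps := by
        rw [hd0, hinl ζ, hinl α, ← map_pow, sub_add_eq_sub_sub, ← map_sub, ← map_sub,
          hζ', map_zero, zero_sub]
      have h2' : ((TrivSqZeroExt.inl ζ : DualNumber K) ^ n - 1 : DualNumber K) = 0 := by
        rw [hinl ζ, ← map_pow, hζn, map_one, sub_self]
      rw [h1, h2', ← hw, neg_mul, neg_eq_zero] at heq
      exact heq
    have hfstw : TrivSqZeroExt.fst w = 0 := by
      have := congrArg TrivSqZeroExt.snd hεw
      simpa [DualNumber.snd_mul, DualNumber.fst_eps, DualNumber.snd_eps] using this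
    have hcomp : ((TrivSqZeroExt.fstHom K K K).toRingHom).comp χ = χ0 := by
      apply Polynomial.ringHom_ext
      · intro a
        simp [hχ, hχ0, TrivSqZeroExt.algebraMap_eq_inl']
      · simp [hχ, hχ0, hd0]
    have hQ0ζ : Q0.eval ζ = 0 := by
      have e1 : Q0.eval ζ = eval₂ χ0 ζ Q := by rw [hQ0, eval_map]
      have e2 : TrivSqZeroExt.fst w
          = (TrivSqZeroExt.fstHom K K K) (eval₂ χ (TrivSqZeroExt.inl ζ) Q) := by
        rw [hw, hQd, eval_map]; rfl
      have e3 : (TrivSqZeroExt.fstHom K K K) (eval₂ χ (TrivSqZeroExt.inl ζ) Q)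
          = eval₂ (((TrivSqZeroExt.fstHom K K K).toRingHom).comp χ)
              ((TrivSqZeroExt.fstHom K K K) (TrivSqZeroExt.inl ζ)) Q :=
        hom_eval₂ Q χ (TrivSqZeroExt.fstHom K K K).toRingHom _
      have e4 : (TrivSqZeroExt.fstHom K K K) (TrivSqZeroExt.inl ζ : DualNumber K) = ζ :=
        TrivSqZeroExt.fst_inl K ζ
      rw [e1, ← hcomp, ← e4, ← e3, ← e2]
      exact hfstw
    -- the derivative computation
    have hpK : ((p : K)) = 0 := by
      have : CharP K p := charP_of_injective_algebraMap hφinj p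
      exact CharP.cast_eq_zero K p
    have hder := congrArg (fun q => Polynomial.eval ζ (Polynomial.derivative q)) hKeq
    simp only [derivative_mul, derivative_sub, derivative_X_pow, derivative_X, derivative_C,
      derivative_one, eval_add, eval_mul, eval_sub, eval_pow, eval_X, eval_C, eval_one,
      eval_zero, sub_zero, eval_natCast] at hder
    rw [hζ', hQ0ζ] at hder
    simp only [mul_zero, zero_mul, add_zero, zero_add] at hder
    -- hder : 0 = n * ζ^(n-1)
    have hζ0 : ζ ≠ 0 := by
      intro h
      rw [h, zero_pow hn.ne'] at hζn
      exact zero_ne_one hζn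
    exact (mul_ne_zero hnK (pow_ne_zero _ hζ0)) hder.symm
  -- conclude squarefreeness
  intro x hx
  by_contra hxu
  have hx0 : x ≠ 0 := by
    rintro rfl
    exact hgK0 (zero_dvd_iff.mp (by simpa using hx))
  have hxdeg : x.degree ≠ 0 := fun h => hxu (Polynomial.isUnit_iff_degree_eq_zero.mpr h)
  obtain ⟨β, hβ⟩ := IsAlgClosed.exists_root x hxdeg
  refine key β (dvd_trans ?_ hx)
  rw [sq]
  exact mul_dvd_mul (dvd_iff_isRoot.mpr hβ) (dvd_iff_isRoot.mpr hβ)
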